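/- Let ρ ∈ L¹(ℝ³) ∩ L^{11/3}(ℝ³) be nonnegative with ‖ρ‖₁ ≤ N and ‖ρ‖_{11/3}^{11/3} ≤ C₁N for some constant C₁ > 0. Then there is a constant C > 0 (depending only on C₁) such that ‖ |·|^{-2} * ρ ‖_∞ ≤ C N^{1/3}. -/

import Mathlib

open MeasureTheory Real Metric Set
open scoped ENNReal

noncomputable section StmtAux

private lemma two_inv_pow_eq (m : ℕ) : ((2:ℝ)⁻¹) ^ m = (2:ℝ) ^ (-(m:ℝ)) := by
  rw [← Real.rpow_neg_one (2:ℝ), ← Real.rpow_natCast ((2:ℝ)^(-1:ℝ)) m,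
    ← Real.rpow_mul (by norm_num : (0:ℝ) ≤ 2)]
  norm_num

private lemma real_id {R : ℝ} (hR : 0 < R) (k : ℕ) :
    (R * (2:ℝ)⁻¹ ^ (k+1)) ^ (-(11:ℝ)/4) * (R * (2:ℝ)⁻¹ ^ k) ^ (3:ℕ) =
      (2 ^ ((11:ℝ)/4) * R ^ ((1:ℝ)/4)) * ((2:ℝ) ^ (-((1:ℝ)/4))) ^ k := by
  have h2 : (0:ℝ) ≤ 2 := by norm_num
  rw [two_inv_pow_eq, two_inv_pow_eq]
  rw [Real.mul_rpow hR.le (Real.rpow_nonneg h2 _), mul_pow,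
    ← Real.rpow_natCast (R) 3, ← Real.rpow_natCast ((2:ℝ)^(-((k:ℝ)))) 3,
    ← Real.rpow_mul h2, ← Real.rpow_mul h2,
    ← Real.rpow_natCast ((2:ℝ)^(-((1:ℝ)/4))) k, ← Real.rpow_mul h2]
  push_cast
  have key : ∀ a b c d : ℝ, R ^ a * (2:ℝ) ^ b * (R ^ c * (2:ℝ) ^ d) =
      R ^ (a + c) * (2:ℝ) ^ (b + d) := by
    intro a b c d
    rw [Real.rpow_add hR, Real.rpow_add (by norm_num : (0:ℝ) < 2)]
    ring
  have key2 : ∀ b d : ℝ, (2:ℝ) ^ b * R ^ ((1:ℝ)/4) * (2:ℝ) ^ d =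
      R ^ ((1:ℝ)/4) * (2:ℝ) ^ (b + d) := by
    intro b d
    rw [Real.rpow_add (by norm_num : (0:ℝ) < 2)]
    ring
  rw [key, key2]
  congr 1
  · norm_num
  · congr 1
    ring

private lemma cover {R : ℝ} (hR : 0 < R) {X : Type*} [NormedAddCommGroup X] :
    ball (0:X) R \ {0} ⊆
      ⋃ k : ℕ, (ball (0:X) (R * (2:ℝ)⁻¹ ^ k) \ ball (0:X) (R * (2:ℝ)⁻¹ ^ (k+1))) := by
  classical
  rintro y ⟨hy, hy0⟩
  have hyne : y ≠ 0 := hy0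
  have hn : 0 < ‖y‖ := norm_pos_iff.2 hyne
  have hyR : ‖y‖ < R := mem_ball_zero_iff.1 hy
  have hex : ∃ k : ℕ, R * (2:ℝ)⁻¹ ^ (k+1) ≤ ‖y‖ := by
    obtain ⟨n, hn'⟩ := exists_pow_lt_of_lt_one (div_pos hn hR)
      (by norm_num : (2:ℝ)⁻¹ < 1)
    refine ⟨n, ?_⟩
    have h1 : (2:ℝ)⁻¹ ^ n * R < ‖y‖ := (lt_div_iff₀ hR).mp hn'
    have h2 : (0:ℝ) < (2:ℝ)⁻¹ ^ n := by positivity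
    have h3 : (2:ℝ)⁻¹ ^ (n+1) ≤ (2:ℝ)⁻¹ ^ n := by
      rw [pow_succ]; nlinarith
    nlinarith
  set k := Nat.find hex with hk
  refine mem_iUnion.2 ⟨k, ?_, ?_⟩
  · rw [mem_ball_zero_iff]
    rcases Nat.eq_zero_or_pos k with h0 | hpos
    · simpa [h0] using hyR
    · have hmin := Nat.find_min hex (show k - 1 < k from Nat.sub_lt hpos one_pos)
      have : k - 1 + 1 = k := Nat.succ_pred_eq_of_pos hpos
      rw [this] at hmin
      exact lt_of_not_ge hmin
  · rw [mem_ball_zero_iff]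
    exact not_lt.2 (Nat.find_spec hex)

/-- the volume of the unit ball in `ℝ³`. -/
private def Vb : ℝ := (volume (ball (0:EuclideanSpace ℝ (Fin 3)) 1)).toReal

private lemma hVb : 0 < Vb :=
  ENNReal.toReal_pos (measure_ball_pos _ _ one_pos).ne' measure_ball_lt_top.ne

/-- the constant in the kernel estimate. -/
private def Kc : ℝ := 2 ^ ((11:ℝ)/4) * Vb * (1 - (2:ℝ) ^ (-((1:ℝ)/4)))⁻¹

private lemma hq1 : (2:ℝ) ^ (-((1:ℝ)/4)) < 1 :=
  Real.rpow_lt_one_of_one_lt_of_neg one_lt_two (by norm_num)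

private lemma hq0 : (0:ℝ) < (2:ℝ) ^ (-((1:ℝ)/4)) := Real.rpow_pos_of_pos two_pos _

private lemma hKc : 0 < Kc := by
  have h1 : (0:ℝ) < 2 ^ ((11:ℝ)/4) := Real.rpow_pos_of_pos two_pos _
  have h2 := hVb
  have h3 : (0:ℝ) < 1 - (2:ℝ) ^ (-((1:ℝ)/4)) := sub_pos.2 hq1
  unfold Kc
  exact mul_pos (mul_pos h1 h2) (inv_pos.2 h3)

private lemma kernel_bound {R : ℝ} (hR : 0 < R) :
    ∫⁻ y in ball (0:EuclideanSpace ℝ (Fin 3)) R, ENNReal.ofReal (‖y‖ ^ (-(11:ℝ)/4)) ≤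
      ENNReal.ofReal (Kc * R ^ ((1:ℝ)/4)) := by
  classical
  set E := EuclideanSpace ℝ (Fin 3)
  set f : E → ℝ≥0∞ := fun y => ENNReal.ofReal (‖y‖ ^ (-(11:ℝ)/4)) with hf
  set r : ℕ → ℝ := fun k => R * (2:ℝ)⁻¹ ^ k with hr
  have hrpos : ∀ k, 0 < r k := fun k => by
    have : (0:ℝ) < (2:ℝ)⁻¹ ^ k := by positivity
    exact mul_pos hR this
  set S : ℕ → Set E := fun k => ball (0:E) (r k) \ ball (0:E) (r (k+1)) with hS
  set q : ℝ := (2:ℝ) ^ (-((1:ℝ)/4)) with hq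
  set V : ℝ≥0∞ := volume (ball (0:E) 1) with hV
  -- step 1 : reduce to the union of shells
  have step1 : ∫⁻ y in ball (0:E) R, f y ≤ ∑' k, ∫⁻ y in S k, f y := by
    have h0 : ball (0:E) R ⊆ (ball (0:E) R \ {0}) ∪ {0} := by
      intro z hz
      by_cases h : z = 0
      · exact Or.inr (by simp [h])
      · exact Or.inl ⟨hz, h⟩
    calc ∫⁻ y in ball (0:E) R, f y ≤ ∫⁻ y in (ball (0:E) R \ {0}) ∪ {0}, f y :=
          lintegral_mono_set h0
      _ ≤ (∫⁻ y in ball (0:E) R \ {0}, f y) + ∫⁻ y in ({0} : Set E), f y :=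
          lintegral_union_le _ _ _
      _ = ∫⁻ y in ball (0:E) R \ {0}, f y := by
          rw [setLIntegral_measure_zero _ _ (measure_singleton 0), add_zero]
      _ ≤ ∫⁻ y in ⋃ k, S k, f y := lintegral_mono_set (cover hR)
      _ ≤ ∑' k, ∫⁻ y in S k, f y := lintegral_iUnion_le _ _
  -- step 2 : bound each shell integral
  have step2 : ∀ k : ℕ, ∫⁻ y in S k, f y ≤
      ENNReal.ofReal ((2 ^ ((11:ℝ)/4) * R ^ ((1:ℝ)/4)) * q ^ k) * V := by
    intro k
    have hb : ∀ y ∈ S k, f y ≤ ENNReal.ofReal ((r (k+1)) ^ (-(11:ℝ)/4)) := by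
      rintro y ⟨_, hy2⟩
      have h1 : r (k+1) ≤ ‖y‖ := not_lt.1 (fun h => hy2 (mem_ball_zero_iff.2 h))
      exact ENNReal.ofReal_le_ofReal
        (Real.rpow_le_rpow_of_nonpos (hrpos (k+1)) h1 (by norm_num))
    have hmeas : MeasurableSet (S k) := measurableSet_ball.diff measurableSet_ball
    calc ∫⁻ y in S k, f y
        ≤ ∫⁻ _ in S k, ENNReal.ofReal ((r (k+1)) ^ (-(11:ℝ)/4)) :=
          setLIntegral_mono' hmeas hb
      _ = ENNReal.ofReal ((r (k+1)) ^ (-(11:ℝ)/4)) * volume (S k) :=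
          setLIntegral_const _ _
      _ ≤ ENNReal.ofReal ((r (k+1)) ^ (-(11:ℝ)/4)) * volume (ball (0:E) (r k)) := by
          exact mul_le_mul_right (measure_mono diff_subset) _
      _ = ENNReal.ofReal ((r (k+1)) ^ (-(11:ℝ)/4)) *
            (ENNReal.ofReal ((r k) ^ (3:ℕ)) * V) := by
          rw [Measure.addHaar_ball volume (0:E) (hrpos k).le]
          congr 2
          simp [E, finrank_euclideanSpace]
      _ = ENNReal.ofReal ((r (k+1)) ^ (-(11:ℝ)/4) * (r k) ^ (3:ℕ)) * V := by
          rw [← mul_assoc, ENNReal.ofReal_mul (Real.rpow_nonneg (hrpos (k+1)).le _)]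
      _ = ENNReal.ofReal ((2 ^ ((11:ℝ)/4) * R ^ ((1:ℝ)/4)) * q ^ k) * V := by
          rw [real_id hR k]
  -- step 3 : sum the geometric series
  have step3 : ∑' k, ENNReal.ofReal ((2 ^ ((11:ℝ)/4) * R ^ ((1:ℝ)/4)) * q ^ k) * V =
      ENNReal.ofReal (2 ^ ((11:ℝ)/4) * R ^ ((1:ℝ)/4)) * (1 - ENNReal.ofReal q)⁻¹ * V := by
    have hc : (0:ℝ) ≤ 2 ^ ((11:ℝ)/4) * R ^ ((1:ℝ)/4) := by positivity
    have : ∀ k : ℕ, ENNReal.ofReal ((2 ^ ((11:ℝ)/4) * R ^ ((1:ℝ)/4)) * q ^ k) * V =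
        ENNReal.ofReal (2 ^ ((11:ℝ)/4) * R ^ ((1:ℝ)/4)) * (ENNReal.ofReal q) ^ k * V := by
      intro k
      rw [ENNReal.ofReal_mul hc, ENNReal.ofReal_pow hq0.le]
    simp_rw [this]
    rw [ENNReal.tsum_mul_right, ENNReal.tsum_mul_left, ENNReal.tsum_geometric]
  refine (step1.trans (ENNReal.tsum_le_tsum step2)).trans ?_
  rw [step3]
  have h1mq : 1 - ENNReal.ofReal q = ENNReal.ofReal (1 - q) := by
    rw [ENNReal.ofReal_sub _ hq0.le, ENNReal.ofReal_one]
  have hVeq : V = ENNReal.ofReal Vb := by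
    rw [hV, Vb, ENNReal.ofReal_toReal measure_ball_lt_top.ne]
  have hc0 : (0:ℝ) ≤ 2 ^ ((11:ℝ)/4) * R ^ ((1:ℝ)/4) := by positivity
  have hinv0 : (0:ℝ) ≤ (1 - q)⁻¹ := by
    rw [hq]; exact le_of_lt (inv_pos.2 (sub_pos.2 hq1))
  have hqinv : (1 - ENNReal.ofReal q)⁻¹ = ENNReal.ofReal ((1 - q)⁻¹) := by
    rw [h1mq, hq, ← ENNReal.ofReal_inv_of_pos (sub_pos.2 hq1)]
  rw [hqinv, hVeq, ← ENNReal.ofReal_mul hc0, ← ENNReal.ofReal_mul (mul_nonneg hc0 hinv0)]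
  apply ENNReal.ofReal_le_ofReal
  apply le_of_eq
  rw [hq]
  unfold Kc
  ring

private lemma pointwise_bound {N t a : ℝ} (hN : 1 ≤ N) (ht : 0 ≤ t) (ha : 0 ≤ a) :
    t ^ (-2:ℝ) * a ≤
      (8/11) * N ^ ((1:ℝ)/4) * (if t < N ^ ((1:ℝ)/3) then t ^ (-(11:ℝ)/4) else 0)
      + (3/11) * N ^ (-(2:ℝ)/3) * a ^ ((11:ℝ)/3)
      + N ^ (-(2:ℝ)/3) * a := by
  have hN0 : (0:ℝ) < N := lt_of_lt_of_le one_pos hN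
  have hRn : (0:ℝ) < N ^ ((1:ℝ)/3) := Real.rpow_pos_of_pos hN0 _
  by_cases hcase : t < N ^ ((1:ℝ)/3)
  · rw [if_pos hcase]
    have hpq : Real.HolderConjugate ((11:ℝ)/8) ((11:ℝ)/3) := ⟨by norm_num, by norm_num, by norm_num⟩
    have hu : (0:ℝ) ≤ N ^ ((2:ℝ)/11) * t ^ (-2:ℝ) := by positivity
    have hv : (0:ℝ) ≤ N ^ (-(2:ℝ)/11) * a := by positivity
    have hyoung := Real.young_inequality_of_nonneg hu hv hpq
    have huv : (N ^ ((2:ℝ)/11) * t ^ (-2:ℝ)) * (N ^ (-(2:ℝ)/11) * a) = t ^ (-2:ℝ) * a := by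
      have : N ^ ((2:ℝ)/11) * N ^ (-(2:ℝ)/11) = 1 := by
        rw [← Real.rpow_add hN0]; norm_num
      calc (N ^ ((2:ℝ)/11) * t ^ (-2:ℝ)) * (N ^ (-(2:ℝ)/11) * a)
          = (N ^ ((2:ℝ)/11) * N ^ (-(2:ℝ)/11)) * (t ^ (-2:ℝ) * a) := by ring
        _ = t ^ (-2:ℝ) * a := by rw [this, one_mul]
    have hup : (N ^ ((2:ℝ)/11) * t ^ (-2:ℝ)) ^ ((11:ℝ)/8) =
        N ^ ((1:ℝ)/4) * t ^ (-(11:ℝ)/4) := by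
      rw [Real.mul_rpow (by positivity) (Real.rpow_nonneg ht _),
        ← Real.rpow_mul hN0.le, ← Real.rpow_mul ht]
      norm_num
    have hvp : (N ^ (-(2:ℝ)/11) * a) ^ ((11:ℝ)/3) =
        N ^ (-(2:ℝ)/3) * a ^ ((11:ℝ)/3) := by
      rw [Real.mul_rpow (by positivity) ha, ← Real.rpow_mul hN0.le]
      norm_num
    rw [huv, hup, hvp] at hyoung
    have hlast : (0:ℝ) ≤ N ^ (-(2:ℝ)/3) * a := by positivity
    calc t ^ (-2:ℝ) * a
        ≤ N ^ ((1:ℝ)/4) * t ^ (-(11:ℝ)/4) / ((11:ℝ)/8)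
          + N ^ (-(2:ℝ)/3) * a ^ ((11:ℝ)/3) / ((11:ℝ)/3) := hyoung
      _ = (8/11) * N ^ ((1:ℝ)/4) * t ^ (-(11:ℝ)/4)
          + (3/11) * N ^ (-(2:ℝ)/3) * a ^ ((11:ℝ)/3) := by ring
      _ ≤ _ := by linarith
  · rw [if_neg hcase]
    have hle : N ^ ((1:ℝ)/3) ≤ t := not_lt.1 hcase
    have h1 : t ^ (-2:ℝ) ≤ (N ^ ((1:ℝ)/3)) ^ (-2:ℝ) :=
      Real.rpow_le_rpow_of_nonpos hRn hle (by norm_num)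
    have h2 : (N ^ ((1:ℝ)/3)) ^ (-2:ℝ) = N ^ (-(2:ℝ)/3) := by
      rw [← Real.rpow_mul hN0.le]; norm_num
    have h3 : t ^ (-2:ℝ) * a ≤ N ^ (-(2:ℝ)/3) * a := by
      rw [← h2]; exact mul_le_mul_of_nonneg_right h1 ha
    have h4 : (0:ℝ) ≤ (3/11) * N ^ (-(2:ℝ)/3) * a ^ ((11:ℝ)/3) := by positivity
    have h5 : (0:ℝ) ≤ (8/11) * N ^ ((1:ℝ)/4) * 0 := by norm_num
    linarith

end StmtAux

set_option maxHeartbeats 2000000 in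
/-- If `ρ ≥ 0` with `‖ρ‖₁ ≤ N` and `‖ρ‖_{11/3}^{11/3} ≤ C₁ N`, then
`‖ |·|⁻² * ρ ‖_∞ ≤ C N^{1/3}` with `C` depending only on `C₁`. -/
theorem stmt4 (C₁ : ℝ) (hC₁ : 0 < C₁) :
    ∃ C > 0, ∀ (N : ℕ), 1 ≤ N →
      ∀ ρ : EuclideanSpace ℝ (Fin 3) → ℝ,
        Measurable ρ → (∀ x, 0 ≤ ρ x) →
        Integrable ρ → Integrable (fun x => ρ x ^ ((11 : ℝ) / 3)) →
        (∫ x, ρ x) ≤ N →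
        (∫ x, ρ x ^ ((11 : ℝ) / 3)) ≤ C₁ * N →
        ∀ x, ∫ y, ‖y‖ ^ (-2 : ℝ) * ρ (x - y) ≤ C * (N : ℝ) ^ ((1 : ℝ) / 3) := by
  classical
  refine ⟨(8/11) * Kc + (3/11) * C₁ + 1, by nlinarith [hKc, hC₁], ?_⟩
  intro N hN ρ hm hnn hInt hInt11 hIN hI11 x
  have hN1 : (1:ℝ) ≤ (N:ℝ) := by exact_mod_cast hN
  have hN0 : (0:ℝ) < (N:ℝ) := lt_of_lt_of_le one_pos hN1
  set Rn : ℝ := (N:ℝ) ^ ((1:ℝ)/3) with hRn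
  have hRn0 : 0 < Rn := Real.rpow_pos_of_pos hN0 _
  set F : EuclideanSpace ℝ (Fin 3) → ℝ := fun y => ‖y‖ ^ (-2:ℝ) * ρ (x - y) with hF
  have hρc : Measurable fun y : EuclideanSpace ℝ (Fin 3) => ρ (x - y) :=
    hm.comp (measurable_const.sub measurable_id)
  have hFm : Measurable F := by
    apply Measurable.mul ?_ hρc
    exact (by measurability : Measurable fun t : ℝ => t ^ (-2:ℝ)).comp measurable_norm
  have hF0 : ∀ y, 0 ≤ F y := fun y =>
    mul_nonneg (Real.rpow_nonneg (norm_nonneg _) _) (hnn _)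
  set G1 : EuclideanSpace ℝ (Fin 3) → ℝ := fun y =>
    (8/11) * (N:ℝ) ^ ((1:ℝ)/4) * (if ‖y‖ < Rn then ‖y‖ ^ (-(11:ℝ)/4) else 0) with hG1
  set G2 : EuclideanSpace ℝ (Fin 3) → ℝ := fun y =>
    (3/11) * (N:ℝ) ^ (-(2:ℝ)/3) * ρ (x - y) ^ ((11:ℝ)/3) with hG2
  set G3 : EuclideanSpace ℝ (Fin 3) → ℝ := fun y =>
    (N:ℝ) ^ (-(2:ℝ)/3) * ρ (x - y) with hG3
  have hpt : ∀ y, F y ≤ G1 y + G2 y + G3 y := fun y =>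
    pointwise_bound hN1 (norm_nonneg y) (hnn (x - y))
  have hmG2 : Measurable fun y => ENNReal.ofReal (G2 y) := by
    apply ENNReal.measurable_ofReal.comp
    apply Measurable.const_mul
    exact (by measurability : Measurable fun t : ℝ => t ^ ((11:ℝ)/3)).comp hρc
  have hmG3 : Measurable fun y => ENNReal.ofReal (G3 y) :=
    ENNReal.measurable_ofReal.comp (hρc.const_mul _)
  -- bound on each piece
  have c10 : (0:ℝ) ≤ (8:ℝ)/11 * (N:ℝ) ^ ((1:ℝ)/4) := by positivity
  have c20 : (0:ℝ) ≤ (3:ℝ)/11 * (N:ℝ) ^ (-(2:ℝ)/3) := by positivity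
  have c30 : (0:ℝ) ≤ (N:ℝ) ^ (-(2:ℝ)/3) := by positivity
  have e1 : ∫⁻ y, ENNReal.ofReal (G1 y) ≤
      ENNReal.ofReal ((8:ℝ)/11 * (N:ℝ) ^ ((1:ℝ)/4) * (Kc * Rn ^ ((1:ℝ)/4))) := by
    have hrepr : ∀ y, ENNReal.ofReal (G1 y) =
        ENNReal.ofReal ((8:ℝ)/11 * (N:ℝ) ^ ((1:ℝ)/4)) *
        (ball (0:EuclideanSpace ℝ (Fin 3)) Rn).indicator
          (fun y => ENNReal.ofReal (‖y‖ ^ (-(11:ℝ)/4))) y := by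
      intro y
      simp only [hG1]
      by_cases h : ‖y‖ < Rn
      · rw [if_pos h, Set.indicator_of_mem (mem_ball_zero_iff.2 h),
          ← ENNReal.ofReal_mul c10]
      · rw [if_neg h,
          Set.indicator_of_notMem (fun hc => h (mem_ball_zero_iff.1 hc)),
          mul_zero, ENNReal.ofReal_zero, mul_zero]
    rw [lintegral_congr hrepr, lintegral_const_mul' _ _ ENNReal.ofReal_ne_top,
      lintegral_indicator measurableSet_ball]
    calc ENNReal.ofReal ((8:ℝ)/11 * (N:ℝ) ^ ((1:ℝ)/4)) *
          ∫⁻ y in ball (0:EuclideanSpace ℝ (Fin 3)) Rn, ENNReal.ofReal (‖y‖ ^ (-(11:ℝ)/4))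
        ≤ ENNReal.ofReal ((8:ℝ)/11 * (N:ℝ) ^ ((1:ℝ)/4)) *
          ENNReal.ofReal (Kc * Rn ^ ((1:ℝ)/4)) :=
          mul_le_mul_right (kernel_bound hRn0) _
      _ = _ := (ENNReal.ofReal_mul c10).symm
  have hint2 : Integrable fun y : EuclideanSpace ℝ (Fin 3) => ρ (x - y) ^ ((11:ℝ)/3) :=
    hInt11.comp_sub_left x
  have hint3 : Integrable fun y : EuclideanSpace ℝ (Fin 3) => ρ (x - y) :=
    hInt.comp_sub_left x
  have i2 : (∫⁻ y, ENNReal.ofReal (ρ (x - y) ^ ((11:ℝ)/3))) =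
      ENNReal.ofReal (∫ z, ρ z ^ ((11:ℝ)/3)) := by
    rw [← ofReal_integral_eq_lintegral_ofReal hint2
      (Filter.Eventually.of_forall fun y => Real.rpow_nonneg (hnn _) _)]
    congr 1
    exact integral_sub_left_eq_self (fun z => ρ z ^ ((11:ℝ)/3)) volume x
  have i3 : (∫⁻ y, ENNReal.ofReal (ρ (x - y))) = ENNReal.ofReal (∫ z, ρ z) := by
    rw [← ofReal_integral_eq_lintegral_ofReal hint3
      (Filter.Eventually.of_forall fun y => hnn _)]
    congr 1
    exact integral_sub_left_eq_self ρ volume x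
  have e2 : ∫⁻ y, ENNReal.ofReal (G2 y) ≤
      ENNReal.ofReal ((3:ℝ)/11 * (N:ℝ) ^ (-(2:ℝ)/3) * (C₁ * N)) := by
    have hrepr : ∀ y, ENNReal.ofReal (G2 y) =
        ENNReal.ofReal ((3:ℝ)/11 * (N:ℝ) ^ (-(2:ℝ)/3)) *
          ENNReal.ofReal (ρ (x - y) ^ ((11:ℝ)/3)) := fun y => by
      simp only [hG2]; rw [ENNReal.ofReal_mul c20]
    rw [lintegral_congr hrepr, lintegral_const_mul' _ _ ENNReal.ofReal_ne_top, i2,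
      ← ENNReal.ofReal_mul c20]
    exact ENNReal.ofReal_le_ofReal (by
      have h := hI11
      nlinarith [Real.rpow_pos_of_pos hN0 (-(2:ℝ)/3)])
  have e3 : ∫⁻ y, ENNReal.ofReal (G3 y) ≤
      ENNReal.ofReal ((N:ℝ) ^ (-(2:ℝ)/3) * (N:ℝ)) := by
    have hrepr : ∀ y, ENNReal.ofReal (G3 y) =
        ENNReal.ofReal ((N:ℝ) ^ (-(2:ℝ)/3)) * ENNReal.ofReal (ρ (x - y)) := fun y => by
      simp only [hG3]; rw [ENNReal.ofReal_mul c30]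
    rw [lintegral_congr hrepr, lintegral_const_mul' _ _ ENNReal.ofReal_ne_top, i3,
      ← ENNReal.ofReal_mul c30]
    exact ENNReal.ofReal_le_ofReal (by
      have h := hIN
      nlinarith [Real.rpow_pos_of_pos hN0 (-(2:ℝ)/3)])
  -- combine
  have key : ∫⁻ y, ENNReal.ofReal (F y) ≤
      ENNReal.ofReal (((8:ℝ)/11 * Kc + 3/11 * C₁ + 1) * (N:ℝ) ^ ((1:ℝ)/3)) := by
    have h1 : ∫⁻ y, ENNReal.ofReal (F y) ≤
        (∫⁻ y, ENNReal.ofReal (G1 y)) + (∫⁻ y, ENNReal.ofReal (G2 y))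
          + ∫⁻ y, ENNReal.ofReal (G3 y) := by
      calc ∫⁻ y, ENNReal.ofReal (F y)
          ≤ ∫⁻ y, (ENNReal.ofReal (G1 y) + ENNReal.ofReal (G2 y)
              + ENNReal.ofReal (G3 y)) := by
            refine lintegral_mono fun y => ?_
            refine (ENNReal.ofReal_le_ofReal (hpt y)).trans ?_
            refine (ENNReal.ofReal_add_le).trans ?_
            gcongr
            exact ENNReal.ofReal_add_le
        _ = _ := by
            rw [lintegral_add_right _ hmG3, lintegral_add_right _ hmG2]
    refine (h1.trans (add_le_add (add_le_add e1 e2) e3)).trans ?_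
    have ha1 : (0:ℝ) ≤ (8:ℝ)/11 * (N:ℝ) ^ ((1:ℝ)/4) * (Kc * Rn ^ ((1:ℝ)/4)) :=
      mul_nonneg c10 (mul_nonneg hKc.le (Real.rpow_nonneg hRn0.le _))
    have ha2 : (0:ℝ) ≤ (3:ℝ)/11 * (N:ℝ) ^ (-(2:ℝ)/3) * (C₁ * (N:ℝ)) :=
      mul_nonneg c20 (mul_nonneg hC₁.le hN0.le)
    have ha3 : (0:ℝ) ≤ (N:ℝ) ^ (-(2:ℝ)/3) * (N:ℝ) := mul_nonneg c30 hN0.le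
    rw [← ENNReal.ofReal_add ha1 ha2, ← ENNReal.ofReal_add (add_nonneg ha1 ha2) ha3]
    apply ENNReal.ofReal_le_ofReal
    have f1 : (N:ℝ) ^ ((1:ℝ)/4) * Rn ^ ((1:ℝ)/4) = (N:ℝ) ^ ((1:ℝ)/3) := by
      rw [hRn, ← Real.rpow_mul (le_of_lt hN0), ← Real.rpow_add hN0]
      norm_num
    have f2 : (N:ℝ) ^ (-(2:ℝ)/3) * (N:ℝ) = (N:ℝ) ^ ((1:ℝ)/3) := by
      nth_rewrite 2 [← Real.rpow_one (N:ℝ)]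
      rw [← Real.rpow_add hN0]
      norm_num
    apply le_of_eq
    calc (8:ℝ)/11 * (N:ℝ) ^ ((1:ℝ)/4) * (Kc * Rn ^ ((1:ℝ)/4))
          + (3:ℝ)/11 * (N:ℝ) ^ (-(2:ℝ)/3) * (C₁ * N)
          + (N:ℝ) ^ (-(2:ℝ)/3) * (N:ℝ)
        = (8:ℝ)/11 * Kc * ((N:ℝ) ^ ((1:ℝ)/4) * Rn ^ ((1:ℝ)/4))
          + (3:ℝ)/11 * C₁ * ((N:ℝ) ^ (-(2:ℝ)/3) * (N:ℝ))
          + ((N:ℝ) ^ (-(2:ℝ)/3) * (N:ℝ)) := by ring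
      _ = _ := by rw [f1, f2]; ring
  -- conclude
  have hfin : HasFiniteIntegral F := by
    rw [hasFiniteIntegral_iff_ofReal (Filter.Eventually.of_forall hF0)]
    exact lt_of_le_of_lt key ENNReal.ofReal_lt_top
  have hbound : (0:ℝ) ≤ ((8:ℝ)/11 * Kc + 3/11 * C₁ + 1) * (N:ℝ) ^ ((1:ℝ)/3) := by
    apply mul_nonneg ?_ (Real.rpow_nonneg hN0.le _)
    nlinarith [hKc, hC₁]
  rw [show (∫ y, F y) = (∫⁻ y, ENNReal.ofReal (F y)).toReal from
    integral_eq_lintegral_of_nonneg_ae (Filter.Eventually.of_forall hF0)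
      hFm.aestronglyMeasurable]
  exact ENNReal.toReal_le_of_le_ofReal hbound key
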